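/- Let ρ be a density matrix with eigenvalues p_i > 0 that is not the ground state projector, with non-degenerate Hamiltonian eigenvalues ε₁ < … < ε_d. Define the β-athermality a_β(ρ) = β(E(ρ) − E(γ_β)) + (S(γ_β) − S(ρ)), where E(γ_β) = ∑ ε_i e^{−βε_i}/Z_β, S(γ_β) = βE(γ_β) + log Z_β, Z_β = ∑ e^{−βε_i}. Then the infimum of a_β(ρ) over β ∈ [0,∞) is attained at the unique β_min with E(γ_{β_min}) = E(ρ), provided E(ρ) is in the range (ε₁, E(γ₀)], and equals S(γ_{β_min}) − S(ρ). -/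

import Mathlib

set_option maxHeartbeats 1000000

open Finset Filter

/-- Partition function of the Gibbs distribution. -/
noncomputable def Zfun {d : ℕ} (ε : Fin d → ℝ) (β : ℝ) : ℝ := ∑ i, Real.exp (-β * ε i)

/-- Mean energy of the Gibbs state at inverse temperature `β`. -/
noncomputable def Egibbs {d : ℕ} (ε : Fin d → ℝ) (β : ℝ) : ℝ :=
  (∑ i, ε i * Real.exp (-β * ε i)) / Zfun ε β

/-- Entropy of the Gibbs state at inverse temperature `β`. -/
noncomputable def Sgibbs {d : ℕ} (ε : Fin d → ℝ) (β : ℝ) : ℝ :=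
  β * Egibbs ε β + Real.log (Zfun ε β)

/-- The β-athermality `a_β(ρ) = β(E(ρ) − E(γ_β)) + (S(γ_β) − S(ρ))`. -/
noncomputable def bAthermality {d : ℕ} (ε p : Fin d → ℝ) (β : ℝ) : ℝ :=
  β * ((∑ i, p i * ε i) - Egibbs ε β) +
    (Sgibbs ε β - (-∑ i, p i * Real.log (p i)))

noncomputable def Afun {d : ℕ} (ε : Fin d → ℝ) (β : ℝ) : ℝ := ∑ i, ε i * Real.exp (-β * ε i)
noncomputable def Bfun {d : ℕ} (ε : Fin d → ℝ) (β : ℝ) : ℝ := ∑ i, (ε i)^2 * Real.exp (-β * ε i)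

section aux
variable {d : ℕ} [NeZero d] (ε : Fin d → ℝ)

lemma Zpos (β : ℝ) : 0 < Zfun ε β :=
  Finset.sum_pos (fun i _ => Real.exp_pos _) Finset.univ_nonempty

lemma hasDerivAt_exp_lin (c β : ℝ) :
    HasDerivAt (fun β : ℝ => Real.exp (-β * c)) (Real.exp (-β * c) * (-c)) β := by
  have h : HasDerivAt (fun β : ℝ => -β * c) (-c) β := by
    simpa using ((hasDerivAt_id β).neg.mul_const c)
  exact h.exp

lemma Z_hasDeriv (β : ℝ) : HasDerivAt (Zfun ε) (-(Afun ε β)) β := by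
  have h := HasDerivAt.fun_sum (fun i (_ : i ∈ Finset.univ) => hasDerivAt_exp_lin (ε i) β)
  have e : (∑ i, Real.exp (-β * ε i) * (-(ε i))) = -(Afun ε β) := by
    simp [Afun, ← Finset.sum_neg_distrib]
    congr 1; ext i; ring
  rw [e] at h
  exact h

lemma A_hasDeriv (β : ℝ) : HasDerivAt (Afun ε) (-(Bfun ε β)) β := by
  have h := HasDerivAt.fun_sum (fun i (_ : i ∈ Finset.univ) =>
    ((hasDerivAt_exp_lin (ε i) β).const_mul (ε i)))
  have e : (∑ i, ε i * (Real.exp (-β * ε i) * (-(ε i)))) = -(Bfun ε β) := by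
    simp [Bfun, ← Finset.sum_neg_distrib]
    congr 1; ext i; ring
  rw [e] at h
  exact h

lemma E_eq (β : ℝ) : Egibbs ε β = Afun ε β / Zfun ε β := rfl

lemma E_hasDeriv (β : ℝ) :
    HasDerivAt (Egibbs ε) ((Afun ε β ^ 2 - Bfun ε β * Zfun ε β) / (Zfun ε β) ^ 2) β := by
  have h := (A_hasDeriv ε β).div (Z_hasDeriv ε β) (ne_of_gt (Zpos ε β))
  have : Egibbs ε = fun β => Afun ε β / Zfun ε β := rfl
  rw [this]
  exact h.congr_deriv (by ring)

lemma var_pos (β : ℝ) (j : Fin d) (hj : ε 0 < ε j) :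
    Afun ε β ^ 2 < Bfun ε β * Zfun ε β := by
  set w : Fin d → ℝ := fun i => Real.exp (-β * ε i) with hw
  have hwpos : ∀ i, 0 < w i := fun i => Real.exp_pos _
  have key : 2 * (Bfun ε β * Zfun ε β - Afun ε β ^ 2)
      = ∑ i, ∑ k, (ε i - ε k)^2 * (w i * w k) := by
    have h1 : Bfun ε β * Zfun ε β = ∑ i, ∑ k, ((ε i)^2 * w i) * (w k) :=
      Finset.sum_mul_sum _ _ _ _
    have h1' : Bfun ε β * Zfun ε β = ∑ i, ∑ k, ((ε k)^2 * w k) * (w i) := by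
      rw [h1]; exact Finset.sum_comm
    have h2 : Afun ε β ^ 2 = ∑ i, ∑ k, (ε i * w i) * (ε k * w k) := by
      rw [sq]; exact Finset.sum_mul_sum _ _ _ _
    calc 2 * (Bfun ε β * Zfun ε β - Afun ε β ^ 2)
        = (∑ i, ∑ k, ((ε i)^2 * w i) * (w k)) + (∑ i, ∑ k, ((ε k)^2 * w k) * (w i))
            - 2 * ∑ i, ∑ k, (ε i * w i) * (ε k * w k) := by
          rw [← h1, ← h1', ← h2]; ring
      _ = ∑ i, ∑ k, (((ε i)^2 * w i) * (w k) + ((ε k)^2 * w k) * (w i)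
            - 2 * ((ε i * w i) * (ε k * w k))) := by
          rw [Finset.mul_sum, ← Finset.sum_add_distrib, ← Finset.sum_sub_distrib]
          refine Finset.sum_congr rfl fun i _ => ?_
          rw [Finset.mul_sum, ← Finset.sum_add_distrib, ← Finset.sum_sub_distrib]
      _ = ∑ i, ∑ k, (ε i - ε k)^2 * (w i * w k) := by
          refine Finset.sum_congr rfl fun i _ => Finset.sum_congr rfl fun k _ => by ring
  have hpos : 0 < ∑ i, ∑ k, (ε i - ε k)^2 * (w i * w k) := by
    refine Finset.sum_pos' (fun i _ => Finset.sum_nonneg fun k _ => by positivity) ?_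
    refine ⟨j, Finset.mem_univ _, ?_⟩
    refine Finset.sum_pos' (fun k _ => by positivity) ⟨0, Finset.mem_univ _, ?_⟩
    have h0 : 0 < ε j - ε 0 := sub_pos.mpr hj
    exact mul_pos (pow_pos h0 2) (mul_pos (hwpos j) (hwpos 0))
  nlinarith

lemma logZ_hasDeriv (β : ℝ) :
    HasDerivAt (fun β => Real.log (Zfun ε β)) (-(Egibbs ε β)) β := by
  have h := (Z_hasDeriv ε β).log (ne_of_gt (Zpos ε β))
  simpa [E_eq, neg_div] using h

end aux

theorem stmt14 {d : ℕ} [NeZero d] (ε p : Fin d → ℝ) (hε : StrictMono ε)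
    (hp : ∀ i, 0 < p i) (hp1 : ∑ i, p i = 1)
    (hE1 : ε 0 < ∑ i, p i * ε i) (hE2 : ∑ i, p i * ε i ≤ Egibbs ε 0) :
    ∃ βmin : ℝ, 0 ≤ βmin ∧ Egibbs ε βmin = ∑ i, p i * ε i ∧
      (∀ β' : ℝ, 0 ≤ β' → Egibbs ε β' = ∑ i, p i * ε i → β' = βmin) ∧
      IsLeast (bAthermality ε p '' Set.Ici 0) (bAthermality ε p βmin) ∧
      bAthermality ε p βmin =
        Sgibbs ε βmin - (-∑ i, p i * Real.log (p i)) := by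
  set c : ℝ := ∑ i, p i * ε i with hc
  -- there is an index with strictly bigger energy
  obtain ⟨j, hj⟩ : ∃ j, ε 0 < ε j := by
    by_contra h
    push_neg at h
    have : c ≤ ∑ i, p i * ε 0 :=
      Finset.sum_le_sum fun i _ => mul_le_mul_of_nonneg_left (h i) (hp i).le
    rw [← Finset.sum_mul, hp1, one_mul] at this
    linarith
  -- E is strictly antitone
  have hEderiv : ∀ β : ℝ, deriv (Egibbs ε) β
      = (Afun ε β ^ 2 - Bfun ε β * Zfun ε β) / (Zfun ε β) ^ 2 :=
    fun β => (E_hasDeriv ε β).deriv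
  have hEanti : StrictAnti (Egibbs ε) := by
    refine strictAnti_of_deriv_neg fun β => ?_
    rw [hEderiv β]
    exact div_neg_of_neg_of_pos (by linarith [var_pos ε β j hj]) (pow_pos (Zpos ε β) 2)
  have hEcont : Continuous (Egibbs ε) :=
    continuous_iff_continuousAt.mpr fun β => (E_hasDeriv ε β).continuousAt
  -- find β₂ with E(β₂) ≤ c
  set g : ℝ → ℝ := fun β => ∑ i, (ε i - ε 0) * Real.exp (-β * (ε i - ε 0)) with hg
  have hgE : ∀ β : ℝ, Egibbs ε β ≤ ε 0 + g β := by
    intro β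
    have hnum : Afun ε β - ε 0 * Zfun ε β = ∑ i, (ε i - ε 0) * Real.exp (-β * ε i) := by
      simp only [Afun, Zfun, Finset.mul_sum, ← Finset.sum_sub_distrib]
      exact Finset.sum_congr rfl fun i _ => by ring
    have hnum_nonneg : 0 ≤ Afun ε β - ε 0 * Zfun ε β := by
      rw [hnum]
      exact Finset.sum_nonneg fun i _ => mul_nonneg
        (sub_nonneg.mpr (hε.monotone (Fin.zero_le i))) (Real.exp_pos _).le
    have hZge : Real.exp (-β * ε 0) ≤ Zfun ε β :=
      Finset.single_le_sum (f := fun i => Real.exp (-β * ε i))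
        (fun i _ => (Real.exp_pos _).le) (Finset.mem_univ 0)
    have h1 : Egibbs ε β - ε 0 = (Afun ε β - ε 0 * Zfun ε β) / Zfun ε β := by
      rw [E_eq, sub_div, mul_div_assoc, div_self (ne_of_gt (Zpos ε β)), mul_one]
    have h2 : (Afun ε β - ε 0 * Zfun ε β) / Zfun ε β
        ≤ (Afun ε β - ε 0 * Zfun ε β) / Real.exp (-β * ε 0) := by
      gcongr
    have h3 : (Afun ε β - ε 0 * Zfun ε β) / Real.exp (-β * ε 0) = g β := by
      rw [hnum, Finset.sum_div]
      refine Finset.sum_congr rfl fun i _ => ?_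
      rw [mul_div_assoc, ← Real.exp_sub]
      have : -β * ε i - -β * ε 0 = -β * (ε i - ε 0) := by ring
      rw [this]
    linarith
  have hgtend : Filter.Tendsto g Filter.atTop (nhds 0) := by
    have : Filter.Tendsto (fun β : ℝ => ∑ i : Fin d, (ε i - ε 0) * Real.exp (-β * (ε i - ε 0)))
        Filter.atTop (nhds (∑ i : Fin d, (0 : ℝ))) := by
      refine tendsto_finset_sum _ fun i _ => ?_
      rcases eq_or_lt_of_le (sub_nonneg.mpr (hε.monotone (Fin.zero_le i))) with h0 | h0
      · simp [← h0]
      · have hexp : Filter.Tendsto (fun β : ℝ => Real.exp (-(β * (ε i - ε 0))))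
            Filter.atTop (nhds 0) :=
          Real.tendsto_exp_neg_atTop_nhds_zero.comp (Filter.tendsto_id.atTop_mul_const h0)
        have := hexp.const_mul (ε i - ε 0)
        simpa [neg_mul, mul_comm] using this
    simpa only [Finset.sum_const_zero] using this
  obtain ⟨β₂, hβ₂pos, hβ₂⟩ : ∃ β₂ : ℝ, 0 ≤ β₂ ∧ g β₂ < c - ε 0 := by
    have h1 : ∀ᶠ β : ℝ in Filter.atTop, g β < c - ε 0 :=
      hgtend.eventually_lt_const (by linarith)
    have h2 : ∀ᶠ β : ℝ in Filter.atTop, 0 ≤ β := Filter.eventually_ge_atTop 0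
    obtain ⟨β₂, h1, h2⟩ := (h2.and h1).exists
    exact ⟨β₂, h1, h2⟩
  have hEβ₂ : Egibbs ε β₂ ≤ c := by
    have := hgE β₂
    linarith
  -- intermediate value theorem
  obtain ⟨βmin, hβmem, hβval⟩ : ∃ βmin ∈ Set.Icc (0:ℝ) β₂, Egibbs ε βmin = c := by
    have hmem : c ∈ Set.Icc (Egibbs ε β₂) (Egibbs ε 0) := ⟨hEβ₂, hE2⟩
    obtain ⟨βmin, hβm, hv⟩ := intermediate_value_Icc' hβ₂pos hEcont.continuousOn hmem
    exact ⟨βmin, hβm, hv⟩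
  have hβmin0 : 0 ≤ βmin := hβmem.1
  -- the auxiliary function f
  set f : ℝ → ℝ := fun β => β * c + Real.log (Zfun ε β) with hf
  have hfderivAt : ∀ β : ℝ, HasDerivAt f (c - Egibbs ε β) β := by
    intro β
    have h1 : HasDerivAt (fun β : ℝ => β * c) c β := hasDerivAt_mul_const c
    have := h1.add (logZ_hasDeriv ε β)
    exact this.congr_deriv (by ring)
  have hfderiv : ∀ β : ℝ, deriv f β = c - Egibbs ε β := fun β => (hfderivAt β).deriv
  have hfcont : Continuous f :=
    continuous_iff_continuousAt.mpr fun β => (hfderivAt β).continuousAt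
  have hmono : StrictMonoOn f (Set.Ici βmin) := by
    refine strictMonoOn_of_deriv_pos (convex_Ici _) hfcont.continuousOn fun x hx => ?_
    rw [interior_Ici] at hx
    rw [hfderiv]
    have : Egibbs ε x < Egibbs ε βmin := hEanti hx
    rw [hβval] at this
    linarith
  have hanti : StrictAntiOn f (Set.Iic βmin) := by
    refine strictAntiOn_of_deriv_neg (convex_Iic _) hfcont.continuousOn fun x hx => ?_
    rw [interior_Iic] at hx
    rw [hfderiv]
    have : Egibbs ε βmin < Egibbs ε x := hEanti hx
    rw [hβval] at this
    linarith
  have hbath : ∀ β : ℝ, bAthermality ε p β = f β + ∑ i, p i * Real.log (p i) := by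
    intro β
    simp only [bAthermality, Sgibbs, hf, ← hc]
    ring
  refine ⟨βmin, hβmin0, hβval, ?_, ?_, ?_⟩
  · intro β' hβ' hval
    by_contra hne
    rcases lt_or_gt_of_ne hne with h | h
    · exact absurd (hval.trans hβval.symm) (ne_of_gt (hEanti h))
    · exact absurd (hβval.trans hval.symm) (ne_of_gt (hEanti h))
  · constructor
    · exact ⟨βmin, hβmin0, rfl⟩
    · rintro y ⟨β, (hβ : (0:ℝ) ≤ β), rfl⟩
      rw [hbath, hbath]
      have : f βmin ≤ f β := by
        rcases lt_trichotomy β βmin with h | h | h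
        · exact (hanti (Set.mem_Iic.mpr h.le) (Set.mem_Iic.mpr le_rfl) h).le
        · rw [h]
        · exact (hmono (Set.mem_Ici.mpr le_rfl) (Set.mem_Ici.mpr h.le) h).le
      linarith
  · simp [bAthermality, hβval, ← hc]
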